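/- Let n \ge 2, k \ge 2, and let t_{k,1} be the smallest root of the degree-k normalized Krawtchouk polynomial Q_k(t). If \ell < t_{k,1}, then the signed measure d\mu_n^{(\ell)}(t) = -(1/\ell)(t-\ell) d\mu_n(t) is positive definite up to degree k-1: for every nonzero real polynomial p of degree at most k-1, \int_{-1}^1 p(t)^2 (t-\ell) d\mu_n(t) > 0. -/

import Mathlib

noncomputable def rchoose (z : ℝ) (j : ℕ) : ℝ :=
  (∏ t ∈ Finset.range j, (z - t)) / (Nat.factorial j)

/-- Binary Krawtchouk polynomial `K_i^{(n)}(z)`. -/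
noncomputable def Kr (n i : ℕ) (z : ℝ) : ℝ :=
  ∑ j ∈ Finset.range (i + 1), (-1 : ℝ) ^ j * rchoose z j * rchoose ((n : ℝ) - z) (i - j)

/-- Normalized Krawtchouk polynomial `Q_i(t) = K_i^{(n)}(n(1-t)/2)/binom(n,i)`. -/
noncomputable def Qn (n i : ℕ) (t : ℝ) : ℝ :=
  Kr n i ((n : ℝ) * (1 - t) / 2) / (n.choose i : ℝ)

/-- The point `t_m = -1 + 2m/n`. -/
noncomputable def tpt (n m : ℕ) : ℝ := -1 + 2 * (m : ℝ) / (n : ℝ)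

/-- Integral of `f` with respect to the measure `μ_n = 2^{-n} ∑ binom(n,i) δ_{t_i}`. -/
noncomputable def muInt (n : ℕ) (f : ℝ → ℝ) : ℝ :=
  ((2 : ℝ) ^ n)⁻¹ * ∑ i ∈ Finset.range (n + 1), (n.choose i : ℝ) * f (tpt n i)

open Polynomial Finset

lemma rchoose_natCast (m j : ℕ) : rchoose (m : ℝ) j = (m.choose j : ℝ) := by
  by_cases h : j ≤ m
  · have hp : ∏ t ∈ Finset.range j, ((m:ℝ) - t) = (m.descFactorial j : ℝ) := by
      rw [Nat.descFactorial_eq_prod_range, Nat.cast_prod]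
      refine Finset.prod_congr rfl fun t ht => ?_
      have : t ≤ m := le_trans (Nat.le_of_lt_succ (Nat.lt_succ_of_lt (Finset.mem_range.mp ht))) h
      rw [Nat.cast_sub this]
    rw [rchoose, hp, Nat.descFactorial_eq_factorial_mul_choose, Nat.cast_mul]
    field_simp
  · push_neg at h
    have hz : ∏ t ∈ Finset.range j, ((m:ℝ) - t) = 0 := by
      apply Finset.prod_eq_zero (Finset.mem_range.mpr h)
      simp
    rw [rchoose, hz, Nat.choose_eq_zero_of_lt h]
    simp

lemma Kr_natCast (n i m : ℕ) (h : m ≤ n) :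
    Kr n i (m : ℝ) = ∑ j ∈ Finset.range (i + 1),
      (-1 : ℝ) ^ j * (m.choose j : ℝ) * ((n - m).choose (i - j) : ℝ) := by
  unfold Kr
  refine Finset.sum_congr rfl fun j _ => ?_
  rw [rchoose_natCast, show ((n:ℝ) - m) = (((n - m : ℕ)):ℝ) by rw [Nat.cast_sub h],
    rchoose_natCast]

lemma choose_swap (m a b : ℕ) : m.choose a * (m - a).choose b = m.choose b * (m - b).choose a := by
  by_cases h : a + b ≤ m
  · have h1 := Nat.choose_mul (n := m) (k := a + b) (s := a) (Nat.le_add_right a b)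
    have h2 := Nat.choose_mul (n := m) (k := a + b) (s := b) (Nat.le_add_left b a)
    have hs : (a + b).choose a = (a + b).choose b := by
      rw [← Nat.choose_symm (Nat.le_add_left b a)]
      congr 1
      omega
    rw [show a + b - a = b by omega] at h1
    rw [show a + b - b = a by omega] at h2
    rw [← h1, ← h2, hs]
  · push_neg at h
    by_cases ha : a ≤ m
    · by_cases hb : b ≤ m
      · rw [Nat.choose_eq_zero_of_lt (show m - a < b by omega),
          Nat.choose_eq_zero_of_lt (show m - b < a by omega)]
        ring
      · rw [Nat.choose_eq_zero_of_lt (show m < b by omega)]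
        rw [Nat.choose_eq_zero_of_lt (show m - a < b by omega)]
        ring
    · rw [Nat.choose_eq_zero_of_lt (show m < a by omega),
        Nat.choose_eq_zero_of_lt (show m - b < a by omega)]
      ring

lemma trinom {n i k j : ℕ} (hi : i ≤ n) (hk : k ≤ n) (hji : j ≤ i) (hjk : j ≤ k) :
    n.choose i * (i.choose j * (n - i).choose (k - j)) =
      n.choose k * (k.choose j * (n - k).choose (i - j)) := by
  have h1 := Nat.choose_mul (n := n) hji
  have h2 := Nat.choose_mul (n := n) hjk
  have h3 : (n - j).choose (i - j) * ((n - j) - (i - j)).choose (k - j) =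
      (n - j).choose (k - j) * ((n - j) - (k - j)).choose (i - j) := choose_swap _ _ _
  have e1 : (n - j) - (i - j) = n - i := by omega
  have e2 : (n - j) - (k - j) = n - k := by omega
  rw [e1, e2] at h3
  calc n.choose i * (i.choose j * (n - i).choose (k - j))
      = (n.choose i * i.choose j) * (n - i).choose (k - j) := by ring
    _ = (n.choose j * (n - j).choose (i - j)) * (n - i).choose (k - j) := by rw [h1]
    _ = n.choose j * ((n - j).choose (i - j) * (n - i).choose (k - j)) := by ring
    _ = n.choose j * ((n - j).choose (k - j) * (n - k).choose (i - j)) := by rw [h3]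
    _ = (n.choose j * (n - j).choose (k - j)) * (n - k).choose (i - j) := by ring
    _ = (n.choose k * k.choose j) * (n - k).choose (i - j) := by rw [h2]
    _ = _ := by ring

/-- Self-duality of Krawtchouk polynomials. -/
lemma Kr_duality {n i k : ℕ} (hi : i ≤ n) (hk : k ≤ n) :
    (n.choose i : ℝ) * Kr n k (i : ℝ) = (n.choose k : ℝ) * Kr n i (k : ℝ) := by
  rw [Kr_natCast n k i hi, Kr_natCast n i k hk, Finset.mul_sum, Finset.mul_sum]
  have hL : ∑ j ∈ Finset.range (k + 1),
      (n.choose i : ℝ) * ((-1:ℝ)^j * (i.choose j) * ((n - i).choose (k - j)))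
      = ∑ j ∈ Finset.range (min i k + 1),
      (n.choose i : ℝ) * ((-1:ℝ)^j * (i.choose j) * ((n - i).choose (k - j))) := by
    symm
    apply Finset.sum_subset
    · intro x hx
      simp only [Finset.mem_range] at *
      omega
    · intro x hx hx'
      simp only [Finset.mem_range] at *
      have : i < x := by omega
      rw [Nat.choose_eq_zero_of_lt this]
      simp
  have hR : ∑ j ∈ Finset.range (i + 1),
      (n.choose k : ℝ) * ((-1:ℝ)^j * (k.choose j) * ((n - k).choose (i - j)))
      = ∑ j ∈ Finset.range (min i k + 1),
      (n.choose k : ℝ) * ((-1:ℝ)^j * (k.choose j) * ((n - k).choose (i - j))) := by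
    symm
    apply Finset.sum_subset
    · intro x hx
      simp only [Finset.mem_range] at *
      omega
    · intro x hx hx'
      simp only [Finset.mem_range] at *
      have : k < x := by omega
      rw [Nat.choose_eq_zero_of_lt this]
      simp
  rw [hL, hR]
  refine Finset.sum_congr rfl fun j hj => ?_
  simp only [Finset.mem_range] at hj
  have hji : j ≤ i := by omega
  have hjk : j ≤ k := by omega
  have := trinom hi hk hji hjk
  have : ((n.choose i * (i.choose j * (n - i).choose (k - j)) : ℕ) : ℝ)
      = ((n.choose k * (k.choose j * (n - k).choose (i - j)) : ℕ) : ℝ) := by rw [this]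
  push_cast at this
  linear_combination ((-1:ℝ))^j * this



lemma coeff_one_sub_X_pow (k j : ℕ) :
    ((1 - X : Polynomial ℝ)^k).coeff j = (-1:ℝ)^j * (k.choose j : ℝ) := by
  have h : (1 - X : Polynomial ℝ) = C (-1) * (X + C (-1)) := by
    rw [map_neg, C_1]
    ring
  rw [h, mul_pow, ← C_pow, coeff_C_mul, coeff_X_add_C_pow]
  by_cases hjk : j ≤ k
  · have hh : (-1:ℝ)^k * (-1:ℝ)^(k-j) = (-1:ℝ)^j := by
      rw [← pow_add, show k + (k - j) = 2*(k-j) + j by omega, pow_add, pow_mul]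
      norm_num
    linear_combination (k.choose j : ℝ) * hh
  · rw [Nat.choose_eq_zero_of_lt (by omega)]
    push_cast
    ring

lemma coeff_F (n k : ℕ) (hk : k ≤ n) (i : ℕ) :
    ((1 - X : Polynomial ℝ)^k * (1 + X)^(n-k)).coeff i = Kr n i (k:ℝ) := by
  rw [Polynomial.coeff_mul,
    Finset.Nat.sum_antidiagonal_eq_sum_range_succ
      (fun a b => ((1 - X : Polynomial ℝ)^k).coeff a * ((1 + X : Polynomial ℝ)^(n-k)).coeff b) i,
    Kr_natCast n i k hk]
  refine Finset.sum_congr rfl fun j _ => ?_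
  rw [coeff_one_sub_X_pow, show (1 + X : Polynomial ℝ) = X + 1 by ring,
    Polynomial.coeff_X_add_one_pow]

lemma sum_Kr_choose (n k : ℕ) (hk : k ≤ n) (j : ℕ) (hj : j < k) :
    ∑ i ∈ Finset.range (n+1), Kr n i (k:ℝ) * (i.choose j : ℝ) = 0 := by
  set F : Polynomial ℝ := (1 - X)^k * (1 + X)^(n-k) with hF
  have hd1 : (1 - X : Polynomial ℝ).natDegree ≤ 1 := by
    refine (natDegree_sub_le _ _).trans ?_
    simp
  have hd2 : (1 + X : Polynomial ℝ).natDegree ≤ 1 := by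
    refine (natDegree_add_le _ _).trans ?_
    simp
  have hdF : F.natDegree < n + 1 := by
    have : F.natDegree ≤ k * 1 + (n - k) * 1 :=
      natDegree_mul_le.trans (add_le_add
        (natDegree_pow_le.trans (Nat.mul_le_mul_left _ hd1))
        (natDegree_pow_le.trans (Nat.mul_le_mul_left _ hd2)))
    omega
  set G := F.comp (X + 1) with hG
  have hGcoeff : G.coeff j = 0 := by
    have h1 : G = C ((-1:ℝ)^k) * ((2 + X : Polynomial ℝ)^(n-k) * X ^ k) := by
      rw [hG, hF, mul_comp, pow_comp, pow_comp, sub_comp, add_comp, one_comp, X_comp]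
      rw [show (1 : Polynomial ℝ) - (X + 1) = C (-1) * X by rw [map_neg, C_1]; ring]
      rw [mul_pow, ← C_pow]
      ring
    rw [h1, coeff_C_mul, Polynomial.coeff_mul_X_pow', if_neg (by omega), mul_zero]
  have hGcoeff2 : G.coeff j = ∑ i ∈ Finset.range (n+1), Kr n i (k:ℝ) * (i.choose j : ℝ) := by
    have hFs : F = ∑ i ∈ Finset.range (n+1), C (F.coeff i) * X ^ i := by
      conv_lhs => rw [F.as_sum_range' (n+1) hdF]
      refine Finset.sum_congr rfl fun i _ => ?_
      rw [C_mul_X_pow_eq_monomial]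
    rw [hG]
    conv_lhs => rw [hFs]
    rw [Polynomial.sum_comp, finset_sum_coeff]
    refine Finset.sum_congr rfl fun i hi => ?_
    rw [mul_comp, C_comp, pow_comp, X_comp, coeff_C_mul, Polynomial.coeff_X_add_one_pow,
      coeff_F n k hk i]
  rw [← hGcoeff2, hGcoeff]

lemma sum_choose_Kr_choose (n k j : ℕ) (hk : k ≤ n) (hj : j < k) :
    ∑ i ∈ Finset.range (n+1), (n.choose i : ℝ) * Kr n k (i:ℝ) * (i.choose j : ℝ) = 0 := by
  have h : ∀ i ∈ Finset.range (n+1), (n.choose i : ℝ) * Kr n k (i:ℝ) * (i.choose j : ℝ)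
      = (n.choose k : ℝ) * (Kr n i (k:ℝ) * (i.choose j : ℝ)) := by
    intro i hi
    rw [Finset.mem_range] at hi
    rw [Kr_duality (by omega) hk]
    ring
  rw [Finset.sum_congr rfl h, ← Finset.mul_sum, sum_Kr_choose n k hk j hj, mul_zero]


lemma exists_choose_basis (d : ℕ) : ∀ q : Polynomial ℝ, q.natDegree ≤ d →
    ∃ a : ℕ → ℝ, ∀ m : ℕ, q.eval (m:ℝ) = ∑ j ∈ Finset.range (d+1), a j * (m.choose j : ℝ) := by
  induction d with
  | zero =>
    intro q hq
    refine ⟨fun _ => q.coeff 0, fun m => ?_⟩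
    conv_lhs => rw [Polynomial.eq_C_of_natDegree_le_zero hq]
    simp
  | succ d ih =>
    intro q hq
    set B : Polynomial ℝ := ∏ t ∈ Finset.range (d+1), (X - C (t:ℝ)) with hB
    have hBm : B.Monic := monic_prod_of_monic _ _ (fun t _ => monic_X_sub_C _)
    have hBd : B.natDegree = d + 1 := by
      rw [hB, natDegree_prod _ _ (fun t _ => X_sub_C_ne_zero _)]
      have h1 : ∑ i ∈ Finset.range (d+1), (X - C (i:ℝ)).natDegree
          = ∑ _i ∈ Finset.range (d+1), 1 :=
        Finset.sum_congr rfl (fun t _ => natDegree_X_sub_C _)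
      rw [h1]
      simp
    set c := q.coeff (d+1) with hc
    set q' := q - C c * B with hq'
    have hq'd : q'.natDegree ≤ d := by
      rw [Polynomial.natDegree_le_iff_coeff_eq_zero]
      intro N hN
      rw [hq', coeff_sub, coeff_C_mul]
      rcases eq_or_lt_of_le (Nat.succ_le_of_lt hN) with h | h
      · rw [← h]
        have : B.coeff (d+1) = 1 := by
          have := hBm.coeff_natDegree
          rwa [hBd] at this
        rw [this, mul_one, hc, sub_self]
      · rw [coeff_eq_zero_of_natDegree_lt (lt_of_le_of_lt hq h),
          coeff_eq_zero_of_natDegree_lt (by omega : B.natDegree < N), mul_zero, sub_zero]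
    obtain ⟨a, ha⟩ := ih q' hq'd
    refine ⟨fun j => if j = d+1 then c * ((d+1).factorial : ℝ) else a j, fun m => ?_⟩
    have hBeval : B.eval (m:ℝ) = (((d+1).factorial : ℝ)) * (m.choose (d+1) : ℝ) := by
      have h1 := rchoose_natCast m (d+1)
      rw [rchoose] at h1
      have heval : B.eval (m:ℝ) = ∏ t ∈ Finset.range (d+1), ((m:ℝ) - t) := by
        rw [hB, eval_prod]
        simp
      rw [div_eq_iff (by positivity : (((d+1).factorial : ℝ)) ≠ 0)] at h1
      rw [heval, h1]
      ring
    have hqe : q.eval (m:ℝ) = q'.eval (m:ℝ) + c * B.eval (m:ℝ) := by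
      rw [hq']
      simp only [eval_sub, eval_mul, eval_C]
      ring
    rw [hqe, ha m, hBeval, Finset.sum_range_succ _ (d+1)]
    simp only [↓reduceIte]
    have hcong : ∀ j ∈ Finset.range (d+1),
        (if j = d+1 then c * ((d+1).factorial : ℝ) else a j) * (m.choose j : ℝ)
        = a j * (m.choose j : ℝ) := by
      intro j hj
      rw [Finset.mem_range] at hj
      rw [if_neg (by omega)]
    rw [Finset.sum_congr rfl hcong]
    ring


lemma orth (n k : ℕ) (hn : 1 ≤ n) (hk1 : 1 ≤ k) (hkn : k ≤ n) (p : Polynomial ℝ)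
    (hp : p.natDegree ≤ k - 1) :
    muInt n (fun t => Qn n k t * p.eval t) = 0 := by
  have hn0 : (n:ℝ) ≠ 0 := Nat.cast_ne_zero.mpr (by omega)
  have hchoose : (n.choose k : ℝ) ≠ 0 := Nat.cast_ne_zero.mpr (Nat.choose_pos hkn).ne'
  unfold muInt
  suffices h : ∑ i ∈ Finset.range (n+1),
      (n.choose i : ℝ) * (Qn n k (tpt n i) * p.eval (tpt n i)) = 0 by
    rw [h, mul_zero]
  set q : Polynomial ℝ := p.comp (C 1 - C (2/(n:ℝ)) * X) with hqdef
  have hlin : (C 1 - C (2/(n:ℝ)) * X : Polynomial ℝ) = C (-(2/(n:ℝ))) * X + C 1 := by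
    rw [map_neg]
    ring
  have hqdeg : q.natDegree ≤ k - 1 := by
    have hc : -(2/(n:ℝ)) ≠ 0 := by
      simp only [ne_eq, neg_eq_zero]
      positivity
    rw [hqdef, natDegree_comp, hlin, natDegree_linear hc, mul_one]
    exact hp
  have hqeval : ∀ i : ℕ, q.eval (i:ℝ) = p.eval (1 - 2*(i:ℝ)/(n:ℝ)) := by
    intro i
    rw [hqdef, eval_comp]
    congr 1
    simp only [eval_sub, eval_mul, eval_C, eval_one, eval_X]
    ring
  have hrefl := Finset.sum_range_reflect
    (fun i => (n.choose i : ℝ) * (Qn n k (tpt n i) * p.eval (tpt n i))) (n+1)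
  rw [← hrefl]
  have hterm : ∀ i ∈ Finset.range (n+1),
      (n.choose (n+1-1-i) : ℝ) * (Qn n k (tpt n (n+1-1-i)) * p.eval (tpt n (n+1-1-i)))
      = (n.choose k : ℝ)⁻¹ * ((n.choose i : ℝ) * Kr n k (i:ℝ) * q.eval (i:ℝ)) := by
    intro i hi
    rw [Finset.mem_range] at hi
    have hi' : i ≤ n := by omega
    have e0 : n + 1 - 1 - i = n - i := by omega
    rw [e0]
    have e1 : (n.choose (n-i) : ℝ) = (n.choose i : ℝ) := by
      rw [Nat.choose_symm hi']
    have e2 : tpt n (n - i) = 1 - 2*(i:ℝ)/(n:ℝ) := by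
      unfold tpt
      rw [Nat.cast_sub hi']
      field_simp
      ring
    have e3 : Qn n k (tpt n (n-i)) = Kr n k (i:ℝ) / (n.choose k : ℝ) := by
      unfold Qn
      rw [e2]
      congr 2
      field_simp
      ring
    rw [e1, e3, hqeval i, e2]
    field_simp
  rw [Finset.sum_congr rfl hterm, ← Finset.mul_sum]
  obtain ⟨a, ha⟩ := exists_choose_basis (k-1) q hqdeg
  have h1 : ∀ i ∈ Finset.range (n+1), (n.choose i:ℝ) * Kr n k (i:ℝ) * q.eval (i:ℝ)
      = ∑ j ∈ Finset.range (k-1+1), a j * ((n.choose i:ℝ) * Kr n k (i:ℝ) * (i.choose j:ℝ)) := by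
    intro i _
    rw [ha i, Finset.mul_sum]
    exact Finset.sum_congr rfl fun j _ => by ring
  rw [Finset.sum_congr rfl h1, Finset.sum_comm]
  have h2 : ∀ j ∈ Finset.range (k-1+1),
      ∑ i ∈ Finset.range (n+1), a j * ((n.choose i:ℝ) * Kr n k (i:ℝ) * (i.choose j:ℝ)) = 0 := by
    intro j hj
    rw [Finset.mem_range] at hj
    rw [← Finset.mul_sum, sum_choose_Kr_choose n k j hkn (by omega), mul_zero]
  rw [Finset.sum_congr rfl h2, Finset.sum_const_zero, mul_zero]


lemma tpt_inj (n : ℕ) (hn : 1 ≤ n) : Function.Injective (tpt n) := by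
  intro i j h
  unfold tpt at h
  have hn0 : (n:ℝ) ≠ 0 := Nat.cast_ne_zero.mpr (by omega)
  field_simp at h
  have h2 : ((2 * i : ℕ) : ℝ) = ((2 * j : ℕ) : ℝ) := by push_cast; linarith
  have h3 : 2 * i = 2 * j := by exact_mod_cast h2
  omega

lemma muInt_sq_pos (n : ℕ) (hn : 1 ≤ n) (r : Polynomial ℝ) (hr : r ≠ 0) (hdeg : r.natDegree ≤ n) :
    0 < muInt n (fun t => r.eval t ^ 2) := by
  unfold muInt
  apply mul_pos (by positivity)
  have hnonneg : ∀ i ∈ Finset.range (n+1), (0:ℝ) ≤ (n.choose i:ℝ) * r.eval (tpt n i)^2 :=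
    fun i hi => by positivity
  have hex : ∃ i ∈ Finset.range (n+1), r.eval (tpt n i) ≠ 0 := by
    by_contra h
    push_neg at h
    apply hr
    classical
    apply Polynomial.eq_zero_of_natDegree_lt_card_of_eval_eq_zero' r
      ((Finset.range (n+1)).image (tpt n))
    · intro x hx
      obtain ⟨i, hi, rfl⟩ := Finset.mem_image.mp hx
      exact h i hi
    · rw [Finset.card_image_of_injOn (Set.injOn_of_injective (tpt_inj n hn)),
        Finset.card_range]
      omega
  obtain ⟨i0, hi0, hne⟩ := hex
  refine Finset.sum_pos' hnonneg ⟨i0, hi0, ?_⟩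
  have h1 : 0 < (n.choose i0 : ℝ) := by
    have : 0 < n.choose i0 := Nat.choose_pos (by
      rw [Finset.mem_range] at hi0
      omega)
    exact_mod_cast this
  positivity

noncomputable def KrPoly (n i : ℕ) : Polynomial ℝ :=
  ∑ j ∈ Finset.range (i+1),
    Polynomial.C ((-1:ℝ)^j * (1/(Nat.factorial j : ℝ)) * (1/(Nat.factorial (i-j) : ℝ))) *
      ((∏ t ∈ Finset.range j, (Polynomial.X - Polynomial.C (t:ℝ))) *
       (∏ t ∈ Finset.range (i-j), (Polynomial.C ((n:ℝ) - t) - Polynomial.X)))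

lemma KrPoly_eval (n i : ℕ) (z : ℝ) : (KrPoly n i).eval z = Kr n i z := by
  unfold KrPoly Kr rchoose
  rw [eval_finset_sum]
  refine Finset.sum_congr rfl fun j _ => ?_
  rw [eval_mul, eval_mul, eval_C, eval_prod, eval_prod]
  have h1 : ∀ t ∈ Finset.range j, (X - C (t:ℝ)).eval z = z - t := fun t _ => by simp
  have h2 : ∀ t ∈ Finset.range (i-j), (C ((n:ℝ) - t) - X).eval z = ((n:ℝ) - z) - t :=
    fun t _ => by
      simp
      ring
  rw [Finset.prod_congr rfl h1, Finset.prod_congr rfl h2]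
  field_simp

lemma KrPoly_natDegree_le (n i : ℕ) : (KrPoly n i).natDegree ≤ i := by
  apply Polynomial.natDegree_sum_le_of_forall_le
  intro j hj
  rw [Finset.mem_range] at hj
  refine (natDegree_C_mul_le _ _).trans (natDegree_mul_le.trans ?_)
  have hA : (∏ t ∈ Finset.range j, (X - C (t:ℝ))).natDegree ≤ j := by
    refine (natDegree_prod_le _ _).trans ?_
    have h1 : ∑ t ∈ Finset.range j, (X - C (t:ℝ)).natDegree ≤ ∑ _t ∈ Finset.range j, 1 :=
      Finset.sum_le_sum fun t _ => by rw [natDegree_X_sub_C]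
    simpa using h1
  have hB : (∏ t ∈ Finset.range (i-j), (C ((n:ℝ) - t) - X)).natDegree ≤ i - j := by
    refine (natDegree_prod_le _ _).trans ?_
    have h1 : ∑ t ∈ Finset.range (i-j), (C ((n:ℝ) - t) - X).natDegree
        ≤ ∑ _t ∈ Finset.range (i-j), 1 :=
      Finset.sum_le_sum fun t _ => by
        have h : (C ((n:ℝ) - t) - X) = -(X - C ((n:ℝ) - t)) := by ring
        rw [h, natDegree_neg, natDegree_X_sub_C]
    simpa using h1
  omega

lemma CsubX_prod_ne (n : ℕ) (m : ℕ) :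
    (∏ t ∈ Finset.range m, (C ((n:ℝ) - t) - X)) ≠ 0 := by
  apply Finset.prod_ne_zero_iff.mpr
  intro t _
  intro h
  have := congrArg (fun p => Polynomial.coeff p 1) h
  simp at this

lemma CsubX_prod_leadingCoeff (n : ℕ) (m : ℕ) :
    (∏ t ∈ Finset.range m, (C ((n:ℝ) - t) - X)).leadingCoeff = (-1:ℝ)^m := by
  rw [leadingCoeff_prod]
  have : ∀ t ∈ Finset.range m, (C ((n:ℝ) - t) - X).leadingCoeff = -1 := fun t _ => by
    have : (C ((n:ℝ) - t) - X) = -(X - C ((n:ℝ) - t)) := by ring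
    rw [this, leadingCoeff_neg, leadingCoeff_X_sub_C]
  rw [Finset.prod_congr rfl this]
  simp

lemma CsubX_prod_natDegree (n : ℕ) (m : ℕ) :
    (∏ t ∈ Finset.range m, (C ((n:ℝ) - t) - X)).natDegree = m := by
  rw [natDegree_prod _ _ (fun t _ => by
    intro h
    have := congrArg (fun p => Polynomial.coeff p 1) h
    simp at this)]
  have : ∀ t ∈ Finset.range m, (C ((n:ℝ) - t) - X).natDegree = 1 := fun t _ => by
    have h : (C ((n:ℝ) - t) - X) = -(X - C ((n:ℝ) - t)) := by ring
    rw [h, natDegree_neg, natDegree_X_sub_C]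
  have h1 : ∑ i ∈ Finset.range m, (C ((n:ℝ) - i) - X).natDegree = ∑ _i ∈ Finset.range m, 1 :=
    Finset.sum_congr rfl this
  rw [h1]
  simp

lemma KrPoly_coeff_top (n k : ℕ) :
    (KrPoly n k).coeff k = (-1:ℝ)^k * 2^k / (k.factorial : ℝ) := by
  unfold KrPoly
  rw [finset_sum_coeff]
  have hterm : ∀ j ∈ Finset.range (k+1),
      (C ((-1:ℝ)^j * (1/(Nat.factorial j : ℝ)) * (1/(Nat.factorial (k-j) : ℝ))) *
        ((∏ t ∈ Finset.range j, (X - C (t:ℝ))) *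
         (∏ t ∈ Finset.range (k-j), (C ((n:ℝ) - t) - X)))).coeff k
      = (-1:ℝ)^k * ((k.choose j : ℝ) / (k.factorial : ℝ)) := by
    intro j hj
    rw [Finset.mem_range] at hj
    have hjk : j ≤ k := by omega
    set A := ∏ t ∈ Finset.range j, (X - C (t:ℝ)) with hA
    set B := ∏ t ∈ Finset.range (k-j), (C ((n:ℝ) - t) - X) with hB
    have hAm : A.Monic := monic_prod_of_monic _ _ fun t _ => monic_X_sub_C _
    have hAd : A.natDegree = j := by
      rw [hA, natDegree_prod _ _ (fun t _ => X_sub_C_ne_zero _)]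
      have h1 : ∑ i ∈ Finset.range j, (X - C (i:ℝ)).natDegree = ∑ _i ∈ Finset.range j, 1 :=
        Finset.sum_congr rfl (fun t _ => natDegree_X_sub_C _)
      rw [h1]
      simp
    have hABd : (A*B).natDegree = k := by
      rw [natDegree_mul hAm.ne_zero (CsubX_prod_ne n _), hAd, CsubX_prod_natDegree]
      omega
    have hABc : (A*B).coeff k = (-1:ℝ)^(k-j) := by
      conv_lhs => rw [← hABd]
      rw [coeff_natDegree, leadingCoeff_mul, hAm.leadingCoeff, CsubX_prod_leadingCoeff, one_mul]
    rw [coeff_C_mul, hABc]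
    have hcast : (k.choose j : ℝ) = (k.factorial:ℝ)/((j.factorial:ℝ) * (((k-j).factorial:ℝ))) :=
      Nat.cast_choose ℝ hjk
    have h2 : (-1:ℝ)^j * (-1:ℝ)^(k-j) = (-1:ℝ)^k := by
      rw [← pow_add, show j + (k - j) = k by omega]
    have hf1 : (Nat.factorial j:ℝ) ≠ 0 := by positivity
    have hf2 : (Nat.factorial (k-j):ℝ) ≠ 0 := by positivity
    have hf3 : (Nat.factorial k:ℝ) ≠ 0 := by positivity
    have h3 : (-1:ℝ)^j * (1/(Nat.factorial j:ℝ)) * (1/(Nat.factorial (k-j):ℝ)) * (-1:ℝ)^(k-j)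
        = ((-1:ℝ)^j * (-1:ℝ)^(k-j)) * (1/((Nat.factorial j:ℝ) * (Nat.factorial (k-j):ℝ))) := by
      ring
    rw [h3, h2, hcast]
    field_simp
  rw [Finset.sum_congr rfl hterm, ← Finset.mul_sum, ← Finset.sum_div, ← Nat.cast_sum,
    Nat.sum_range_choose]
  push_cast
  ring

noncomputable def QPoly (n k : ℕ) : Polynomial ℝ :=
  C (1/(n.choose k : ℝ)) * (KrPoly n k).comp (C ((n:ℝ)/2) - C ((n:ℝ)/2) * X)

lemma QPoly_eval (n k : ℕ) (t : ℝ) : (QPoly n k).eval t = Qn n k t := by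
  unfold QPoly Qn
  rw [eval_mul, eval_C, eval_comp, KrPoly_eval]
  have harg : (C ((n:ℝ)/2) - C ((n:ℝ)/2) * X).eval t = (n:ℝ) * (1 - t)/2 := by
    simp only [eval_sub, eval_mul, eval_C, eval_X]
    ring
  rw [harg]
  ring

lemma KrPoly_natDegree (n k : ℕ) : (KrPoly n k).natDegree = k := by
  refine le_antisymm (KrPoly_natDegree_le n k) ?_
  apply le_natDegree_of_ne_zero
  rw [KrPoly_coeff_top]
  exact div_ne_zero (mul_ne_zero (pow_ne_zero _ (by norm_num)) (by positivity)) (by positivity)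

lemma QPoly_natDegree (n k : ℕ) (hn : 1 ≤ n) (hkn : k ≤ n) : (QPoly n k).natDegree = k := by
  unfold QPoly
  have hnc : (n.choose k : ℝ) ≠ 0 := Nat.cast_ne_zero.mpr (Nat.choose_pos hkn).ne'
  have hc : (1/(n.choose k : ℝ)) ≠ 0 := one_div_ne_zero hnc
  have hn0 : (n:ℝ) ≠ 0 := Nat.cast_ne_zero.mpr (by omega)
  rw [natDegree_C_mul hc, natDegree_comp, KrPoly_natDegree]
  have hlin : (C ((n:ℝ)/2) - C ((n:ℝ)/2) * X : Polynomial ℝ)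
      = C (-((n:ℝ)/2)) * X + C ((n:ℝ)/2) := by
    rw [map_neg]
    ring
  rw [hlin, natDegree_linear (neg_ne_zero.mpr (div_ne_zero hn0 two_ne_zero)), mul_one]

lemma QPoly_ne_zero (n k : ℕ) (hn : 1 ≤ n) (hk : 1 ≤ k) (hkn : k ≤ n) : QPoly n k ≠ 0 := by
  intro h
  have := QPoly_natDegree n k hn hkn
  rw [h, natDegree_zero] at this
  omega

lemma QPoly_coeff_ne_zero (n k : ℕ) (hn : 1 ≤ n) (hk : 1 ≤ k) (hkn : k ≤ n) :
    (QPoly n k).coeff k ≠ 0 := by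
  have hd := QPoly_natDegree n k hn hkn
  have h := leadingCoeff_ne_zero.mpr (QPoly_ne_zero n k hn hk hkn)
  rwa [leadingCoeff, hd] at h


lemma muInt_add (n : ℕ) (f g : ℝ → ℝ) :
    muInt n (fun t => f t + g t) = muInt n f + muInt n g := by
  unfold muInt
  rw [← mul_add, ← Finset.sum_add_distrib]
  congr 1
  exact Finset.sum_congr rfl fun i _ => by ring

lemma muInt_cmul (n : ℕ) (c : ℝ) (f : ℝ → ℝ) :
    muInt n (fun t => c * f t) = c * muInt n f := by
  unfold muInt
  have h : ∑ i ∈ Finset.range (n+1), (n.choose i:ℝ) * (c * f (tpt n i))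
      = c * ∑ i ∈ Finset.range (n+1), (n.choose i:ℝ) * f (tpt n i) := by
    rw [Finset.mul_sum]
    exact Finset.sum_congr rfl fun i _ => by ring
  rw [h]
  ring

lemma muInt_congr (n : ℕ) {f g : ℝ → ℝ} (h : ∀ t, f t = g t) : muInt n f = muInt n g := by
  congr 1
  exact funext h

noncomputable def PofC (k : ℕ) (c : EuclideanSpace ℝ (Fin k)) : Polynomial ℝ :=
  ∑ i : Fin k, Polynomial.C (c i) * Polynomial.X ^ (i : ℕ)

lemma PofC_eval (k : ℕ) (c : EuclideanSpace ℝ (Fin k)) (t : ℝ) :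
    (PofC k c).eval t = ∑ i : Fin k, c i * t ^ (i : ℕ) := by
  unfold PofC
  rw [eval_finset_sum]
  exact Finset.sum_congr rfl fun i _ => by simp

lemma PofC_natDegree_le (k : ℕ) (hk : 1 ≤ k) (c : EuclideanSpace ℝ (Fin k)) :
    (PofC k c).natDegree ≤ k - 1 := by
  apply Polynomial.natDegree_sum_le_of_forall_le
  intro i _
  refine (natDegree_C_mul_le _ _).trans ?_
  rw [natDegree_X_pow]
  have := i.is_lt
  omega

lemma PofC_coeff (k : ℕ) (c : EuclideanSpace ℝ (Fin k)) (j : Fin k) :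
    (PofC k c).coeff (j : ℕ) = c j := by
  unfold PofC
  rw [finset_sum_coeff]
  rw [Finset.sum_eq_single j]
  · rw [coeff_C_mul, coeff_X_pow, if_pos rfl, mul_one]
  · intro i _ hij
    rw [coeff_C_mul, coeff_X_pow, if_neg (fun h => hij (Fin.ext h.symm)), mul_zero]
  · intro h
    exact absurd (Finset.mem_univ j) h

lemma PofC_of_poly (k : ℕ) (hk : 1 ≤ k) (p : Polynomial ℝ) (hp : p.natDegree ≤ k - 1) :
    PofC k (WithLp.toLp 2 (fun i : Fin k => p.coeff i)) = p := by
  conv_rhs => rw [p.as_sum_range' k (by omega)]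
  unfold PofC
  rw [← Fin.sum_univ_eq_sum_range (fun i => (Polynomial.monomial i) (p.coeff i)) k]
  exact Finset.sum_congr rfl fun i _ => by rw [C_mul_X_pow_eq_monomial]

lemma PofC_ne_zero (k : ℕ) (c : EuclideanSpace ℝ (Fin k)) (hc : c ≠ 0) : PofC k c ≠ 0 := by
  intro h
  apply hc
  ext j
  have := PofC_coeff k c j
  rw [h, coeff_zero] at this
  exact this.symm

lemma PofC_smul_eval (k : ℕ) (a : ℝ) (c : EuclideanSpace ℝ (Fin k)) (t : ℝ) :
    (PofC k (a • c)).eval t = a * (PofC k c).eval t := by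
  rw [PofC_eval, PofC_eval, Finset.mul_sum]
  refine Finset.sum_congr rfl fun i _ => ?_
  rw [PiLp.smul_apply, smul_eq_mul]
  ring

lemma cont_aux (n k : ℕ) (g : ℝ → ℝ) :
    Continuous (fun c : EuclideanSpace ℝ (Fin k) =>
      muInt n (fun t => (PofC k c).eval t ^ 2 * g t)) := by
  have heq : (fun c : EuclideanSpace ℝ (Fin k) => muInt n (fun t => (PofC k c).eval t^2 * g t))
      = fun c => ((2:ℝ)^n)⁻¹ * ∑ i ∈ Finset.range (n+1), (n.choose i:ℝ) *
          ((∑ j : Fin k, c j * (tpt n i)^(j:ℕ))^2 * g (tpt n i)) := by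
    funext c
    unfold muInt
    congr 1
    exact Finset.sum_congr rfl fun i _ => by
      simp only []
      rw [PofC_eval]
  rw [heq]
  apply Continuous.mul continuous_const
  apply continuous_finset_sum
  intro i _
  apply Continuous.mul continuous_const
  apply Continuous.mul _ continuous_const
  apply Continuous.pow
  apply continuous_finset_sum
  intro j _
  exact ((EuclideanSpace.proj j).continuous).mul continuous_const

lemma quad_coeff_zero {a b : ℝ} (h : ∀ x : ℝ, 0 ≤ b * x + a * x^2) : b = 0 := by
  by_contra hb
  have hb2 : (0:ℝ) < b ^ 2 := by positivity
  set t0 : ℝ := 1 / (2 * (|a| + 1)) with ht0def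
  have ht0 : 0 < t0 := by positivity
  have hat0 : a * t0 < 1 := by
    have h1 : a * t0 ≤ |a| * t0 := mul_le_mul_of_nonneg_right (le_abs_self a) ht0.le
    have h2 : |a| * t0 < 1 := by
      rw [ht0def]
      rw [mul_one_div, div_lt_one (by positivity)]
      have := abs_nonneg a
      linarith
    linarith
  have hkey := h (-b * t0)
  have h3 : b * (-b * t0) + a * (-b * t0)^2 = b^2 * t0 * (a * t0 - 1) := by ring
  have h4 : b^2 * t0 * (a * t0 - 1) < 0 :=
    mul_neg_of_pos_of_neg (mul_pos hb2 ht0) (by linarith)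
  linarith [h3 ▸ hkey]


lemma muInt_zero_fun (n : ℕ) : muInt n (fun _ => (0:ℝ)) = 0 := by
  unfold muInt
  simp

theorem signed_measure_positive_definite (n k : ℕ) (hn : 2 ≤ n) (hk : 2 ≤ k) (hkn : k ≤ n)
    (t1 : ℝ) (hroot : Qn n k t1 = 0) (hleast : ∀ t : ℝ, Qn n k t = 0 → t1 ≤ t)
    (ℓ : ℝ) (hℓ : ℓ < t1)
    (p : Polynomial ℝ) (hp : p ≠ 0) (hdeg : p.natDegree ≤ k - 1) :
    0 < muInt n (fun t => p.eval t ^ 2 * (t - ℓ)) := by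
  classical
  have hk1 : 1 ≤ k := by omega
  have hn1 : 1 ≤ n := by omega
  set E := EuclideanSpace ℝ (Fin k) with hE
  set Nf : E → ℝ := fun c => muInt n (fun t => (PofC k c).eval t ^ 2 * 1) with hNf
  set Mf : E → ℝ := fun c => muInt n (fun t => (PofC k c).eval t ^ 2 * t) with hMf
  have hNpos : ∀ c : E, c ≠ 0 → 0 < Nf c := by
    intro c hc
    have h1 : (fun t => (PofC k c).eval t ^ 2 * 1) = fun t => (PofC k c).eval t ^ 2 := by
      funext t
      ring
    rw [hNf]
    simp only [h1]
    exact muInt_sq_pos n hn1 _ (PofC_ne_zero k c hc)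
      ((PofC_natDegree_le k hk1 c).trans (by omega))
  set φ : E → ℝ := fun c => Mf c / Nf c with hφ
  have hsne : (Metric.sphere (0 : E) 1).Nonempty := by
    refine ⟨EuclideanSpace.single (⟨0, by omega⟩ : Fin k) (1:ℝ), ?_⟩
    rw [mem_sphere_zero_iff_norm, EuclideanSpace.norm_single]
    norm_num
  have hφcont : ContinuousOn φ (Metric.sphere (0 : E) 1) := by
    apply ContinuousOn.div (cont_aux n k (fun t => t)).continuousOn
      (cont_aux n k (fun _ => 1)).continuousOn
    intro c hc
    rw [mem_sphere_zero_iff_norm] at hc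
    have hc0 : c ≠ 0 := by
      intro h
      rw [h] at hc
      simp at hc
    exact (hNpos c hc0).ne'
  obtain ⟨cstar, hcS, hmin⟩ :=
    (isCompact_sphere (0 : E) 1).exists_isMinOn hsne hφcont
  set lam := φ cstar with hlam
  have hcne : cstar ≠ 0 := by
    rw [mem_sphere_zero_iff_norm] at hcS
    intro h
    rw [h] at hcS
    simp at hcS
  have hmin' : ∀ c : E, c ≠ 0 → lam ≤ φ c := by
    intro c hc
    have hnorm : ‖c‖ ≠ 0 := norm_ne_zero_iff.mpr hc
    set a := ‖c‖⁻¹ with ha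
    have ha0 : a ≠ 0 := inv_ne_zero hnorm
    have hu : a • c ∈ Metric.sphere (0 : E) 1 := by
      rw [mem_sphere_zero_iff_norm, norm_smul, ha, norm_inv, norm_norm]
      field_simp
    have h1 := (isMinOn_iff.mp hmin) _ hu
    have hMs : Mf (a • c) = a^2 * Mf c := by
      rw [hMf]
      simp only []
      have h2 : (fun t => (PofC k (a • c)).eval t^2 * t)
          = fun t => a^2 * ((PofC k c).eval t^2 * t) := by
        funext t
        rw [PofC_smul_eval]
        ring
      rw [h2, muInt_cmul]
    have hNs : Nf (a • c) = a^2 * Nf c := by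
      rw [hNf]
      simp only []
      have h2 : (fun t => (PofC k (a • c)).eval t^2 * 1)
          = fun t => a^2 * ((PofC k c).eval t^2 * 1) := by
        funext t
        rw [PofC_smul_eval]
        ring
      rw [h2, muInt_cmul]
    have heq : φ (a • c) = φ c := by
      rw [hφ]
      simp only []
      rw [hMs, hNs, mul_div_mul_left _ _ (pow_ne_zero 2 ha0)]
    rw [hlam]
    rw [heq] at h1
    exact h1
  have hexp : ∀ c : E, muInt n (fun t => (PofC k c).eval t^2 * (t - lam))
      = Mf c - lam * Nf c := by
    intro c
    rw [hMf, hNf]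
    simp only []
    have h2 : (fun t => (PofC k c).eval t^2 * (t - lam))
        = fun t => ((PofC k c).eval t^2 * t) + (-lam) * ((PofC k c).eval t^2 * 1) := by
      funext t
      ring
    rw [h2, muInt_add, muInt_cmul]
    ring
  have hB : ∀ q : Polynomial ℝ, q.natDegree ≤ k - 1 →
      0 ≤ muInt n (fun t => q.eval t ^ 2 * (t - lam)) := by
    intro q hq
    by_cases hq0 : q = 0
    · have hz : (fun t => q.eval t ^ 2 * (t - lam)) = fun _ => (0:ℝ) := by
        funext t
        rw [hq0]
        simp
      rw [hz, muInt_zero_fun]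
    · set c : E := WithLp.toLp 2 (fun i => q.coeff i : Fin k → ℝ) with hcdef
      have hPc : PofC k c = q := PofC_of_poly k hk1 q hq
      have hc0 : c ≠ 0 := by
        intro h
        apply hq0
        rw [← hPc, h]
        unfold PofC
        refine Finset.sum_eq_zero fun i _ => ?_
        have h0 : (0 : E) i = 0 := rfl
        rw [h0, map_zero, zero_mul]
      have h1 := hmin' c hc0
      have hNc := hNpos c hc0
      rw [hφ] at h1
      simp only [] at h1
      rw [le_div_iff₀ hNc] at h1
      have h3 := hexp c
      rw [hPc] at h3
      rw [h3]
      linarith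
  set pstar := PofC k cstar with hpstar
  have hpsne : pstar ≠ 0 := PofC_ne_zero k cstar hcne
  have hpsdeg : pstar.natDegree ≤ k - 1 := PofC_natDegree_le k hk1 cstar
  have hBps : muInt n (fun t => pstar.eval t^2 * (t - lam)) = 0 := by
    have hNc : Nf cstar ≠ 0 := (hNpos cstar hcne).ne'
    rw [hpstar, hexp cstar, hlam, hφ]
    simp only []
    field_simp
    ring
  have horthB : ∀ q : Polynomial ℝ, q.natDegree ≤ k - 1 →
      muInt n (fun t => pstar.eval t * q.eval t * (t - lam)) = 0 := by
    intro q hq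
    have hall : ∀ x : ℝ, 0 ≤ (2 * muInt n (fun t => pstar.eval t * q.eval t * (t-lam))) * x
        + (muInt n (fun t => q.eval t^2 * (t-lam))) * x^2 := by
      intro x
      have hdeg2 : (pstar + C x * q).natDegree ≤ k - 1 :=
        (natDegree_add_le _ _).trans (max_le hpsdeg ((natDegree_C_mul_le _ _).trans hq))
      have h2 := hB (pstar + C x * q) hdeg2
      have hfun : (fun t => (pstar + C x * q).eval t^2 * (t - lam))
          = fun t => (pstar.eval t^2*(t-lam)) +
            (x * (2 * (pstar.eval t * q.eval t * (t-lam))) + x^2 * (q.eval t^2*(t-lam))) := by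
        funext t
        simp only [eval_add, eval_mul, eval_C]
        ring
      rw [hfun, muInt_add, muInt_add, muInt_cmul, muInt_cmul, hBps] at h2
      have h4 : (fun t => 2 * (pstar.eval t * q.eval t * (t-lam)))
          = fun t => 2 * (pstar.eval t * q.eval t * (t-lam)) := rfl
      rw [muInt_cmul] at h2
      nlinarith [h2]
    have := quad_coeff_zero hall
    linarith
  set QP := QPoly n k with hQP
  set r := (X - C lam) * pstar with hr
  have hrdeg : r.natDegree ≤ k := by
    rw [hr]
    refine natDegree_mul_le.trans ?_
    rw [natDegree_X_sub_C]
    omega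
  have horthr : ∀ q : Polynomial ℝ, q.natDegree ≤ k - 1 →
      muInt n (fun t => r.eval t * q.eval t) = 0 := by
    intro q hq
    have h1 : (fun t => r.eval t * q.eval t)
        = fun t => pstar.eval t * q.eval t * (t - lam) := by
      funext t
      rw [hr]
      simp only [eval_mul, eval_sub, eval_X, eval_C]
      ring
    rw [h1]
    exact horthB q hq
  have horthQ : ∀ q : Polynomial ℝ, q.natDegree ≤ k - 1 →
      muInt n (fun t => QP.eval t * q.eval t) = 0 := by
    intro q hq
    have h1 : (fun t => QP.eval t * q.eval t) = fun t => Qn n k t * q.eval t := by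
      funext t
      rw [hQP, QPoly_eval]
    rw [h1]
    exact orth n k hn1 hk1 hkn q hq
  have hQPcoeff := QPoly_coeff_ne_zero n k hn1 hk1 hkn
  set cc := r.coeff k / QP.coeff k with hcc
  set s := r - C cc * QP with hs
  have hQPdeg : QP.natDegree = k := QPoly_natDegree n k hn1 hkn
  have hsdeg : s.natDegree ≤ k - 1 := by
    rw [natDegree_le_iff_coeff_eq_zero]
    intro N hN
    have hNk : k ≤ N := by omega
    rw [hs, coeff_sub, coeff_C_mul]
    rcases eq_or_lt_of_le hNk with h | h
    · rw [← h, hcc]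
      field_simp
      have hQPc : QP.coeff k ≠ 0 := hQPcoeff
      rw [div_self hQPc, sub_self, mul_zero]
    · rw [coeff_eq_zero_of_natDegree_lt (by omega : r.natDegree < N),
        coeff_eq_zero_of_natDegree_lt (by omega : QP.natDegree < N), mul_zero, sub_zero]
  have horths : muInt n (fun t => s.eval t ^ 2) = 0 := by
    have h1 : (fun t => s.eval t ^ 2)
        = fun t => (r.eval t * s.eval t) + (-cc) * (QP.eval t * s.eval t) := by
      funext t
      rw [hs]
      simp only [eval_sub, eval_mul, eval_C]
      ring
    rw [h1, muInt_add, muInt_cmul, horthr s hsdeg, horthQ s hsdeg]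
    ring
  have hs0 : s = 0 := by
    by_contra hsne
    have := muInt_sq_pos n hn1 s hsne (hsdeg.trans (by omega))
    linarith
  have hreq : r = C cc * QP := by
    have := sub_eq_zero.mp hs0
    exact this
  have hccne : cc ≠ 0 := by
    intro h
    rw [h, map_zero, zero_mul] at hreq
    rw [hr] at hreq
    rcases mul_eq_zero.mp hreq with h1 | h1
    · exact X_sub_C_ne_zero lam h1
    · exact hpsne h1
  have hQlam : Qn n k lam = 0 := by
    have h1 := congrArg (fun q => Polynomial.eval lam q) hreq
    simp only [eval_mul, eval_sub, eval_X, eval_C, hr] at h1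
    rw [sub_self, zero_mul] at h1
    have h2 : cc * QP.eval lam = 0 := h1.symm
    have h3 : QP.eval lam = 0 := by
      rcases mul_eq_zero.mp h2 with h | h
      · exact absurd h hccne
      · exact h
    rw [← QPoly_eval n k lam]
    exact h3
  have hlamge : t1 ≤ lam := hleast lam hQlam
  -- final computation
  have hfinal : (fun t => p.eval t ^ 2 * (t - ℓ))
      = fun t => (p.eval t^2 * (t - lam)) + (lam - ℓ) * (p.eval t^2 * 1) := by
    funext t
    ring
  rw [hfinal, muInt_add, muInt_cmul]
  have h1 := hB p hdeg
  have h2 : 0 < muInt n (fun t => p.eval t^2 * 1) := by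
    have h3 : (fun t => p.eval t^2 * 1) = fun t => p.eval t^2 := by
      funext t
      ring
    rw [h3]
    exact muInt_sq_pos n hn1 p hp (hdeg.trans (by omega))
  have h4 : 0 < lam - ℓ := by linarith
  nlinarith [h1, h2, h4]
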